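/- Let V ∈ ℝ^{NL×NL} maximize tr(CV) subject to: V ⪰ 0, V_{(i,k);(i,l)} = 0 for k ≠ l, and Σ_k V_{(i,k);(i,k)} = 1 for each i, where C_{(i,k);(j,l)} = ⟨R_{-k}y_i, R_{-l}y_j⟩ and the Fourier transforms F(y_i,k) are all nonzero. Then the maximum value of tr(CV) equals (1/L) Σ_{k∈ℤ_L} Σ_{i,j∈[N]} |F(y_i,k)| |F(y_j,k)| · L = Σ_k (Σ_i |F(y_i,k)|·√L)² / L, attained by the matrix whose Fourier blocks are V_k with (V_k)_{ij} = (1/L) · F(y_i,k) conj(F(y_j,k)) / |F(y_i,k) conj(F(y_j,k))|. -/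

import Mathlib

open Finset

/-- Unitary discrete Fourier transform of a real vector. -/
noncomputable def dftR {L : ℕ} [NeZero L] (x : ZMod L → ℝ) (k : ZMod L) : ℂ :=
  (1 / Real.sqrt L) * ∑ j : ZMod L, (x j : ℂ) *
    Complex.exp (-(2 * (Real.pi : ℂ) * Complex.I * (j.val : ℂ) * (k.val : ℂ) / (L : ℂ)))

/-- Feasibility for the alignment SDP without entrywise positivity constraints:
`V ⪰ 0`, `V_{(i,k);(i,l)} = 0` for `k ≠ l`, and `Σ_k V_{(i,k);(i,k)} = 1`. -/
def Feas (N L : ℕ) [NeZero L]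
    (V : Matrix (Fin N × ZMod L) (Fin N × ZMod L) ℝ) : Prop :=
  V.PosSemidef ∧ (∀ (i : Fin N) (k l : ZMod L), k ≠ l → V (i, k) (i, l) = 0)
    ∧ ∀ i : Fin N, ∑ k : ZMod L, V (i, k) (i, k) = 1

set_option linter.unusedSectionVars false
set_option maxHeartbeats 1600000

open Matrix

namespace Stmt7Aux

section CharPart
variable {L : ℕ} [NeZero L]

noncomputable def e {L : ℕ} [NeZero L] : ZMod L → ℂ := fun m => ZMod.stdAddChar m

lemma e_add (a b : ZMod L) : e (a + b) = e a * e b := AddChar.map_add_eq_mul _ _ _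

lemma e_zero : e (0 : ZMod L) = 1 := AddChar.map_zero_eq_one _

lemma abs_e (a : ZMod L) : ‖(e a)‖ = 1 := by
  simp [e, ZMod.stdAddChar_apply, Circle.norm_coe]

lemma e_ne_zero (a : ZMod L) : e a ≠ 0 := by
  intro h; have := abs_e a; rw [h] at this; simp at this

lemma e_neg (a : ZMod L) : e (-a) = starRingEnd ℂ (e a) := by
  have h1 : e a * e (-a) = 1 := by rw [← e_add]; simp [e_zero]
  have h2 : e a * starRingEnd ℂ (e a) = 1 := by
    rw [Complex.mul_conj]
    norm_cast
    rw [← Complex.sq_norm, abs_e]; norm_num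
  exact mul_left_cancel₀ (e_ne_zero a) (h1.trans h2.symm)

lemma sum_e (d : ZMod L) : ∑ t : ZMod L, e (d * t) = if d = 0 then (L : ℂ) else 0 := by
  classical
  have key : ∀ t : ZMod L, e (d * t) = (AddChar.mulShift ZMod.stdAddChar d) t := by
    intro t; rw [AddChar.mulShift_apply, mul_comm]; rfl
  rw [Finset.sum_congr rfl fun t _ => key t]
  split_ifs with h
  · subst h
    simp only [AddChar.mulShift_zero, AddChar.one_apply]
    simp [ZMod.card]
  · refine AddChar.sum_eq_zero_iff_ne_zero.mpr ?_
    rw [← AddChar.one_eq_zero]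
    exact ZMod.isPrimitive_stdAddChar L h

lemma dftR_eq (x : ZMod L → ℝ) (k : ZMod L) :
    dftR x k = (1 / Real.sqrt L) * ∑ j : ZMod L, (x j : ℂ) * e (-(j * k)) := by
  unfold dftR
  congr 1
  refine Finset.sum_congr rfl fun j _ => ?_
  congr 1
  have h1 : (-(j * k) : ZMod L) = ((-(j.val * k.val : ℤ) : ℤ) : ZMod L) := by
    push_cast
    rw [ZMod.natCast_zmod_val, ZMod.natCast_zmod_val]
  rw [h1]
  show _ = ZMod.stdAddChar _
  rw [ZMod.stdAddChar_coe]
  congr 1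
  push_cast
  ring


lemma dftR_conj (x : ZMod L → ℝ) (k : ZMod L) :
    starRingEnd ℂ (dftR x k) = (1 / (Real.sqrt L : ℂ)) * ∑ j : ZMod L, (x j : ℂ) * e (j * k) := by
  rw [dftR_eq, _root_.map_mul]
  congr 1
  · simp [map_div₀, Complex.conj_ofReal]
  rw [map_sum]
  refine Finset.sum_congr rfl fun j _ => ?_
  rw [_root_.map_mul, ← e_neg, neg_neg, Complex.conj_ofReal]

lemma dftR_neg (x : ZMod L → ℝ) (k : ZMod L) :
    dftR x (-k) = starRingEnd ℂ (dftR x k) := by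
  rw [dftR_conj, dftR_eq]
  congr 1
  refine Finset.sum_congr rfl fun j _ => ?_
  congr 1
  congr 1
  ring

lemma inv_sqrtL_sq : (1 / (Real.sqrt L : ℂ)) * (1 / (Real.sqrt L : ℂ)) * (L : ℂ) = 1 := by
  have hL : (0:ℝ) < L := Nat.cast_pos.mpr (Nat.pos_of_ne_zero (NeZero.ne L))
  have hs : ((Real.sqrt L : ℝ):ℂ) ≠ 0 := by
    norm_cast; positivity
  have hm : ((Real.sqrt L : ℝ):ℂ) * ((Real.sqrt L : ℝ):ℂ) = (L : ℂ) := by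
    norm_cast
    exact Real.mul_self_sqrt hL.le
  field_simp
  linear_combination -hm

lemma reindex (x z : ZMod L → ℝ) (k l : ZMod L) :
    ∑ t : ZMod L, x (t + k) * z (t + l) = ∑ t : ZMod L, x (t + (k - l)) * z t := by
  rw [← Equiv.sum_comp (Equiv.addRight l) (fun t => x (t + (k - l)) * z t)]
  refine Finset.sum_congr rfl fun t _ => ?_
  simp only [Equiv.coe_addRight]
  congr 2
  ring

lemma Cform (x z : ZMod L → ℝ) (d : ZMod L) :
    ∑ m : ZMod L, dftR x m * starRingEnd ℂ (dftR z m) * e (m * d)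
      = ((∑ t : ZMod L, x (t + d) * z t : ℝ) : ℂ) := by
  have step1 : ∀ m : ZMod L, dftR x m * starRingEnd ℂ (dftR z m) * e (m * d)
      = (1 / (Real.sqrt L : ℂ)) * (1 / (Real.sqrt L : ℂ)) *
        ∑ s : ZMod L, ∑ t : ZMod L, (x s : ℂ) * (z t : ℂ) * e ((t - s + d) * m) := by
    intro m
    rw [dftR_eq, dftR_conj]
    rw [show (1 / (Real.sqrt L : ℂ)) * (∑ s : ZMod L, (x s : ℂ) * e (-(s * m))) *
        ((1 / (Real.sqrt L : ℂ)) * ∑ t : ZMod L, (z t : ℂ) * e (t * m)) * e (m * d)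
      = (1 / (Real.sqrt L : ℂ)) * (1 / (Real.sqrt L : ℂ)) *
        ((∑ s : ZMod L, (x s : ℂ) * e (-(s * m))) * (∑ t : ZMod L, (z t : ℂ) * e (t * m))
          * e (m * d)) from by ring]
    congr 1
    rw [Finset.sum_mul_sum, Finset.sum_mul]
    refine Finset.sum_congr rfl fun s _ => ?_
    rw [Finset.sum_mul]
    refine Finset.sum_congr rfl fun t _ => ?_
    have harg : ((t - s + d) * m : ZMod L) = -(s * m) + (t * m + m * d) := by ring
    rw [harg, e_add, e_add]
    ring
  rw [Finset.sum_congr rfl fun m _ => step1 m, ← Finset.mul_sum]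
  rw [Finset.sum_comm (γ := ZMod L)]
  have step2 : ∀ s : ZMod L, (∑ m : ZMod L, ∑ t : ZMod L, (x s : ℂ) * (z t : ℂ) * e ((t - s + d) * m))
      = (x s : ℂ) * (z (s - d) : ℂ) * L := by
    intro s
    rw [Finset.sum_comm]
    have h1 : ∀ t : ZMod L, (∑ m : ZMod L, (x s : ℂ) * (z t : ℂ) * e ((t - s + d) * m))
        = (x s : ℂ) * (z t : ℂ) * (if t = s - d then (L:ℂ) else 0) := by
      intro t
      rw [← Finset.mul_sum, sum_e]
      congr 2
      exact propext ⟨fun h => by linear_combination h, fun h => by rw [h]; ring⟩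
    rw [Finset.sum_congr rfl fun t _ => h1 t]
    simp only [mul_ite, mul_zero]
    rw [Finset.sum_ite_eq' Finset.univ (s - d) (fun t => (x s : ℂ) * (z t : ℂ) * L)]
    simp
  rw [Finset.sum_congr rfl fun s _ => step2 s]
  have step3 : ∑ s : ZMod L, (x s : ℂ) * (z (s - d) : ℂ) * (L:ℂ)
      = (∑ s : ZMod L, (x s : ℂ) * (z (s - d) : ℂ)) * L := by
    rw [← Finset.sum_mul]
  rw [step3, show (1 / (Real.sqrt L : ℂ)) * (1 / (Real.sqrt L : ℂ)) *
      ((∑ s : ZMod L, (x s : ℂ) * (z (s - d) : ℂ)) * L)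
    = ((1 / (Real.sqrt L : ℂ)) * (1 / (Real.sqrt L : ℂ)) * (L:ℂ)) *
      (∑ s : ZMod L, (x s : ℂ) * (z (s - d) : ℂ)) from by ring, inv_sqrtL_sq, one_mul]
  push_cast
  rw [← Equiv.sum_comp (Equiv.addRight d) (fun s => (x s : ℂ) * (z (s - d) : ℂ))]
  refine Finset.sum_congr rfl fun t _ => ?_
  simp only [Equiv.coe_addRight]
  congr 2
  ring

end CharPart

section QuadPart
variable {ι : Type*} [Fintype ι] [DecidableEq ι]

lemma mulVec_map (A : Matrix ι ι ℝ) (v : ι → ℂ) (r : ι) :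
    (A.map Complex.ofReal).mulVec v r = ∑ p, ((A r p : ℝ) : ℂ) * v p := by
  simp [Matrix.mulVec, dotProduct, Matrix.map_apply]

lemma quad_eq_inner (A : Matrix ι ι ℝ) (x y : ι → ℂ) :
    ∑ p, ∑ q, starRingEnd ℂ (x p) * (((Aᴴ * A) p q : ℝ) : ℂ) * y q
      = ∑ r, starRingEnd ℂ ((A.map Complex.ofReal).mulVec x r)
          * ((A.map Complex.ofReal).mulVec y r) := by
  have hAA : ∀ p q, ((Aᴴ * A) p q : ℝ) = ∑ r, A r p * A r q := by
    intro p q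
    simp [Matrix.mul_apply, Matrix.conjTranspose_apply]
  calc ∑ p, ∑ q, starRingEnd ℂ (x p) * (((Aᴴ * A) p q : ℝ) : ℂ) * y q
      = ∑ p, ∑ q, ∑ r, starRingEnd ℂ (x p) * ((A r p : ℝ) : ℂ) * (((A r q : ℝ) : ℂ) * y q) := by
        refine Finset.sum_congr rfl fun p _ => Finset.sum_congr rfl fun q _ => ?_
        rw [hAA]
        push_cast
        rw [Finset.mul_sum, Finset.sum_mul]
        refine Finset.sum_congr rfl fun r _ => by ring
    _ = ∑ p, ∑ r, ∑ q, starRingEnd ℂ (x p) * ((A r p : ℝ) : ℂ) * (((A r q : ℝ) : ℂ) * y q) := by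
        exact Finset.sum_congr rfl fun p _ => Finset.sum_comm
    _ = ∑ r, ∑ p, ∑ q, starRingEnd ℂ (x p) * ((A r p : ℝ) : ℂ) * (((A r q : ℝ) : ℂ) * y q) :=
        Finset.sum_comm
    _ = ∑ r, starRingEnd ℂ ((A.map Complex.ofReal).mulVec x r)
          * ((A.map Complex.ofReal).mulVec y r) := by
        refine Finset.sum_congr rfl fun r _ => ?_
        rw [mulVec_map, mulVec_map, map_sum, Finset.sum_mul_sum]
        refine Finset.sum_congr rfl fun p _ => Finset.sum_congr rfl fun q _ => ?_
        rw [_root_.map_mul, Complex.conj_ofReal]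
        ring

noncomputable def Gv (A : Matrix ι ι ℝ) (v : ι → ℂ) : EuclideanSpace ℂ ι :=
  (WithLp.equiv 2 (ι → ℂ)).symm ((A.map Complex.ofReal).mulVec v)

lemma Gv_apply (A : Matrix ι ι ℝ) (v : ι → ℂ) (r : ι) :
    Gv A v r = (A.map Complex.ofReal).mulVec v r := rfl

lemma quad_inner_eq (A : Matrix ι ι ℝ) (x y : ι → ℂ) :
    ∑ p, ∑ q, starRingEnd ℂ (x p) * (((Aᴴ * A) p q : ℝ) : ℂ) * y q
      = @inner ℂ _ _ (Gv A x) (Gv A y) := by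
  rw [quad_eq_inner, PiLp.inner_apply]
  refine Finset.sum_congr rfl fun r _ => ?_
  rw [RCLike.inner_apply, Gv_apply, Gv_apply]
  ring


end QuadPart

section MainPart
variable {L : ℕ} [NeZero L]

noncomputable def uvec {N L : ℕ} [NeZero L] (y : Fin N → ZMod L → ℝ) (m : ZMod L) :
    Fin N × ZMod L → ℂ :=
  fun p => starRingEnd ℂ (dftR (y p.1) m) * e (-(m * p.2))

noncomputable def xvec {N L : ℕ} [NeZero L] (y : Fin N → ZMod L → ℝ) (m : ZMod L) (i : Fin N) :
    Fin N × ZMod L → ℂ :=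
  fun p => if p.1 = i then uvec y m p else 0

variable {N : ℕ} (y : Fin N → ZMod L → ℝ) (m : ZMod L)

lemma abs_uvec (p : Fin N × ZMod L) :
    ‖(uvec y m p)‖ = ‖(dftR (y p.1) m)‖ := by
  simp only [uvec]
  rw [norm_mul, abs_e, mul_one, Complex.norm_conj]

lemma uvec_eq_sum : uvec y m = ∑ i : Fin N, xvec y m i := by
  funext p
  rw [Finset.sum_apply]
  simp only [xvec]
  rw [Finset.sum_ite_eq Finset.univ p.1 (fun _ => uvec y m p)]
  simp

lemma block_diag (W : Matrix (Fin N × ZMod L) (Fin N × ZMod L) ℝ) (hW : Feas N L W) (i : Fin N) :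
    ∑ p, ∑ q, starRingEnd ℂ (xvec y m i p) * ((W p q : ℝ) : ℂ) * xvec y m i q
      = ((‖(dftR (y i) m)‖ ^ 2 : ℝ) : ℂ) := by
  rw [Fintype.sum_prod_type]
  have hinner : ∀ (i' : Fin N) (k : ZMod L),
      ∑ q : Fin N × ZMod L, starRingEnd ℂ (xvec y m i (i', k)) * ((W (i',k) q : ℝ) : ℂ) * xvec y m i q
      = if i' = i then ∑ l : ZMod L,
          starRingEnd ℂ (uvec y m (i, k)) * ((W (i,k) (i,l) : ℝ) : ℂ) * uvec y m (i, l) else 0 := by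
    intro i' k
    by_cases h : i' = i
    · subst h
      simp only [if_true]
      rw [Fintype.sum_prod_type]
      have hq : ∀ j' : Fin N, ∑ l : ZMod L,
          starRingEnd ℂ (xvec y m i' (i', k)) * ((W (i',k) (j',l) : ℝ) : ℂ) * xvec y m i' (j', l)
          = if j' = i' then ∑ l : ZMod L,
              starRingEnd ℂ (uvec y m (i', k)) * ((W (i',k) (i',l) : ℝ) : ℂ) * uvec y m (i', l) else 0 := by
        intro j'
        by_cases hj : j' = i'
        · subst hj
          simp only [if_true]
          refine Finset.sum_congr rfl fun l _ => ?_
          simp [xvec]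
        · simp only [hj, if_false]
          refine Finset.sum_eq_zero fun l _ => ?_
          simp [xvec, hj]
      rw [Finset.sum_congr rfl fun j' _ => hq j']
      rw [Finset.sum_ite_eq' Finset.univ i' _]
      simp
    · simp only [h, if_false]
      refine Finset.sum_eq_zero fun q _ => ?_
      simp [xvec, h]
  rw [Finset.sum_congr rfl fun i' _ => Finset.sum_congr rfl fun k _ => hinner i' k]
  have houter : ∀ i' : Fin N, (∑ k : ZMod L, if i' = i then ∑ l : ZMod L,
      starRingEnd ℂ (uvec y m (i, k)) * ((W (i,k) (i,l) : ℝ) : ℂ) * uvec y m (i, l) else 0)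
      = if i' = i then ∑ k : ZMod L, ∑ l : ZMod L,
          starRingEnd ℂ (uvec y m (i, k)) * ((W (i,k) (i,l) : ℝ) : ℂ) * uvec y m (i, l) else 0 := by
    intro i'
    by_cases h : i' = i <;> simp [h]
  rw [Finset.sum_congr rfl fun i' _ => houter i']
  rw [Finset.sum_ite_eq' Finset.univ i _]
  simp only [Finset.mem_univ, if_true]
  have hrow : ∀ k : ZMod L, ∑ l : ZMod L,
      starRingEnd ℂ (uvec y m (i, k)) * ((W (i,k) (i,l) : ℝ) : ℂ) * uvec y m (i, l)
      = ((W (i,k) (i,k) : ℝ) : ℂ) * ((‖(dftR (y i) m)‖ ^ 2 : ℝ) : ℂ) := by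
    intro k
    rw [Finset.sum_eq_single_of_mem k (Finset.mem_univ k)]
    · rw [show starRingEnd ℂ (uvec y m (i, k)) * ((W (i,k) (i,k) : ℝ) : ℂ) * uvec y m (i, k)
        = ((W (i,k) (i,k) : ℝ) : ℂ) * (uvec y m (i, k) * starRingEnd ℂ (uvec y m (i, k))) from by ring]
      rw [Complex.mul_conj]
      congr 1
      rw [Complex.normSq_eq_norm_sq]
      norm_cast
      rw [abs_uvec]
    · intro l _ hlk
      rw [hW.2.1 i k l (Ne.symm hlk)]
      simp
  rw [Finset.sum_congr rfl fun k _ => hrow k]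
  rw [← Finset.sum_mul]
  norm_cast
  rw [hW.2.2 i]
  simp


section B
variable {L N : ℕ} [NeZero L] (y : Fin N → ZMod L → ℝ) (m : ZMod L)

lemma quad_bound (W : Matrix (Fin N × ZMod L) (Fin N × ZMod L) ℝ) (hW : Feas N L W) :
    (∑ p, ∑ q, starRingEnd ℂ (uvec y m p) * ((W p q : ℝ) : ℂ) * uvec y m q).re
      ≤ (∑ i : Fin N, ‖(dftR (y i) m)‖) ^ 2 := by
  classical
  obtain ⟨A, hA⟩ : ∃ B : Matrix (Fin N × ZMod L) (Fin N × ZMod L) ℝ, W = Bᴴ * B := by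
    open scoped MatrixOrder in
    exact CStarAlgebra.nonneg_iff_eq_star_mul_self.mp hW.1.nonneg
  set g : Fin N → EuclideanSpace ℂ (Fin N × ZMod L) := fun i => Gv A (xvec y m i) with hg
  -- decompose the quadratic form
  have hdecomp : ∑ p, ∑ q, starRingEnd ℂ (uvec y m p) * ((W p q : ℝ) : ℂ) * uvec y m q
      = ∑ i : Fin N, ∑ j : Fin N,
          ∑ p, ∑ q, starRingEnd ℂ (xvec y m i p) * ((W p q : ℝ) : ℂ) * xvec y m j q := by
    have h1 : ∀ p q, starRingEnd ℂ (uvec y m p) * ((W p q : ℝ) : ℂ) * uvec y m q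
        = ∑ i : Fin N, ∑ j : Fin N,
            starRingEnd ℂ (xvec y m i p) * ((W p q : ℝ) : ℂ) * xvec y m j q := by
      intro p q
      rw [uvec_eq_sum y m]
      rw [Finset.sum_apply, Finset.sum_apply, map_sum, Finset.sum_mul, Finset.sum_mul]
      refine Finset.sum_congr rfl fun i _ => ?_
      rw [Finset.mul_sum]
    rw [Finset.sum_congr rfl fun p _ => Finset.sum_congr rfl fun q _ => h1 p q]
    -- now swap the four sums
    rw [Finset.sum_congr rfl fun p _ => Finset.sum_comm]
    rw [Finset.sum_comm]
    refine Finset.sum_congr rfl fun i _ => ?_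
    rw [Finset.sum_congr rfl fun p _ => Finset.sum_comm]
    rw [Finset.sum_comm]
  have hinner : ∀ i j, ∑ p, ∑ q, starRingEnd ℂ (xvec y m i p) * ((W p q : ℝ) : ℂ) * xvec y m j q
      = @inner ℂ _ _ (g i) (g j) := by
    intro i j
    rw [hA]
    exact quad_inner_eq A (xvec y m i) (xvec y m j)
  have hnorm : ∀ i, ‖g i‖ = ‖(dftR (y i) m)‖ := by
    intro i
    have h1 : @inner ℂ _ _ (g i) (g i) = ((‖(dftR (y i) m)‖ ^ 2 : ℝ) : ℂ) := by
      rw [← hinner i i, block_diag y m W hW i]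
    have h3 : ‖g i‖ ^ 2 = ‖(dftR (y i) m)‖ ^ 2 := by
      have h2 := inner_self_eq_norm_sq (𝕜 := ℂ) (x := g i)
      rw [h1] at h2
      simp only [RCLike.re_to_complex, Complex.ofReal_re] at h2
      exact h2.symm
    calc ‖g i‖ = Real.sqrt (‖g i‖ ^ 2) := (Real.sqrt_sq (norm_nonneg _)).symm
      _ = Real.sqrt (‖(dftR (y i) m)‖ ^ 2) := by rw [h3]
      _ = ‖(dftR (y i) m)‖ := Real.sqrt_sq (norm_nonneg _)
  rw [hdecomp]
  rw [Finset.sum_congr rfl fun i _ => Finset.sum_congr rfl fun j _ => hinner i j]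
  rw [Complex.re_sum]
  calc ∑ i : Fin N, (∑ j : Fin N, (inner ℂ (g i) (g j) : ℂ)).re
      = ∑ i : Fin N, ∑ j : Fin N, ((inner ℂ (g i) (g j) : ℂ)).re := by
        refine Finset.sum_congr rfl fun i _ => Complex.re_sum _ _
    _ ≤ ∑ i : Fin N, ∑ j : Fin N, ‖g i‖ * ‖g j‖ := by
        refine Finset.sum_le_sum fun i _ => Finset.sum_le_sum fun j _ => ?_
        calc ((inner ℂ (g i) (g j) : ℂ)).re ≤ ‖(inner ℂ (g i) (g j) : ℂ)‖ :=
              Complex.re_le_norm _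
          _ = ‖(inner ℂ (g i) (g j) : ℂ)‖ := rfl
          _ ≤ ‖g i‖ * ‖g j‖ := norm_inner_le_norm _ _
    _ = (∑ i : Fin N, ‖(dftR (y i) m)‖) ^ 2 := by
        rw [sq, Finset.sum_mul_sum]
        refine Finset.sum_congr rfl fun i _ => Finset.sum_congr rfl fun j _ => ?_
        rw [hnorm i, hnorm j]

end B
section C
variable {L N : ℕ} [NeZero L]

lemma conj_u_mul_u (y : Fin N → ZMod L → ℝ) (m : ZMod L) (p q : Fin N × ZMod L) :
    starRingEnd ℂ (uvec y m p) * uvec y m q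
      = dftR (y p.1) m * starRingEnd ℂ (dftR (y q.1) m) * e (m * (p.2 - q.2)) := by
  simp only [uvec, _root_.map_mul, Complex.conj_conj]
  rw [← e_neg, neg_neg]
  have : e (m * p.2) * e (-(m * q.2)) = e (m * (p.2 - q.2)) := by
    rw [← e_add]; congr 1; ring
  calc dftR (y p.1) m * e (m * p.2) * (starRingEnd ℂ (dftR (y q.1) m) * e (-(m * q.2)))
      = dftR (y p.1) m * starRingEnd ℂ (dftR (y q.1) m) * (e (m * p.2) * e (-(m * q.2))) := by ring
    _ = _ := by rw [this]

lemma C_entry (y : Fin N → ZMod L → ℝ) (C : Matrix (Fin N × ZMod L) (Fin N × ZMod L) ℝ)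
    (hC : ∀ (i j : Fin N) (k l : ZMod L),
      C (i, k) (j, l) = ∑ t : ZMod L, y i (t + k) * y j (t + l))
    (p q : Fin N × ZMod L) :
    ((C p q : ℝ) : ℂ) = ∑ m : ZMod L, starRingEnd ℂ (uvec y m p) * uvec y m q := by
  obtain ⟨i, k⟩ := p
  obtain ⟨j, l⟩ := q
  rw [hC i j k l, reindex, ← Cform]
  refine Finset.sum_congr rfl fun m _ => ?_
  rw [conj_u_mul_u]

lemma trace_eq (y : Fin N → ZMod L → ℝ) (C W : Matrix (Fin N × ZMod L) (Fin N × ZMod L) ℝ)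
    (hC : ∀ (i j : Fin N) (k l : ZMod L),
      C (i, k) (j, l) = ∑ t : ZMod L, y i (t + k) * y j (t + l))
    (hsym : ∀ p q, W q p = W p q) :
    (((C * W).trace : ℝ) : ℂ) = ∑ m : ZMod L, ∑ p, ∑ q,
      starRingEnd ℂ (uvec y m p) * ((W p q : ℝ) : ℂ) * uvec y m q := by
  have h1 : (C * W).trace = ∑ p, ∑ q, C p q * W p q := by
    rw [Matrix.trace]
    refine Finset.sum_congr rfl fun p _ => ?_
    rw [Matrix.diag_apply, Matrix.mul_apply]
    exact Finset.sum_congr rfl fun q _ => by rw [hsym]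
  rw [h1]
  push_cast
  have h2 : ∀ p q : Fin N × ZMod L, ((C p q : ℝ) : ℂ) * ((W p q : ℝ) : ℂ)
      = ∑ m : ZMod L, starRingEnd ℂ (uvec y m p) * ((W p q : ℝ) : ℂ) * uvec y m q := by
    intro p q
    rw [C_entry y C hC p q, Finset.sum_mul]
    exact Finset.sum_congr rfl fun m _ => by ring
  rw [Finset.sum_congr rfl fun p _ => Finset.sum_congr rfl fun q _ => h2 p q]
  rw [Finset.sum_congr rfl fun p _ => Finset.sum_comm]
  exact Finset.sum_comm

end C

noncomputable def phase (z : ℂ) : ℂ := z / (‖z‖ : ℝ)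

lemma phase_conj (z : ℂ) : phase (starRingEnd ℂ z) = starRingEnd ℂ (phase z) := by
  simp [phase, map_div₀, Complex.conj_ofReal]

lemma abs_phase {z : ℂ} (hz : z ≠ 0) : ‖(phase z)‖ = 1 := by
  simp only [phase, norm_div, Complex.norm_real, Real.norm_eq_abs]
  rw [abs_of_nonneg (norm_nonneg z)]
  exact div_self (norm_ne_zero_iff.mpr hz)

lemma conj_phase_mul {z : ℂ} (hz : z ≠ 0) : starRingEnd ℂ (phase z) * phase z = 1 := by
  rw [mul_comm, Complex.mul_conj, Complex.normSq_eq_norm_sq, abs_phase hz]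
  norm_num

lemma conj_mul_phase {z : ℂ} (hz : z ≠ 0) :
    starRingEnd ℂ z * phase z = ((‖z‖ : ℝ) : ℂ) := by
  have habs : ((‖z‖ : ℝ) : ℂ) ≠ 0 := by
    simpa using norm_ne_zero_iff.mpr hz
  rw [phase, mul_div_assoc']
  rw [mul_comm, Complex.mul_conj, Complex.normSq_eq_norm_sq]
  rw [show ((‖z‖ ^ 2 : ℝ) : ℂ) = ((‖z‖ : ℝ) : ℂ) ^ 2 by push_cast; ring]
  rw [sq, mul_div_assoc, div_self habs, mul_one]

section Main
variable {L N : ℕ} [NeZero L] (y : Fin N → ZMod L → ℝ)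

noncomputable def vvec (m : ZMod L) : Fin N × ZMod L → ℂ :=
  fun p => starRingEnd ℂ (phase (dftR (y p.1) m)) * e (-(m * p.2))

noncomputable def Smat : Matrix (Fin N × ZMod L) (Fin N × ZMod L) ℂ :=
  fun p q => ∑ m : ZMod L, starRingEnd ℂ (vvec y m p) * vvec y m q

noncomputable def W0 : Matrix (Fin N × ZMod L) (Fin N × ZMod L) ℝ :=
  fun p q => (Smat y p q).re / (L ^ 2 : ℝ)

lemma vvec_neg (m : ZMod L) (p : Fin N × ZMod L) :
    vvec y (-m) p = starRingEnd ℂ (vvec y m p) := by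
  simp only [vvec, _root_.map_mul]
  rw [dftR_neg, phase_conj, Complex.conj_conj, ← e_neg]
  congr 2
  ring

lemma Smat_conj (p q : Fin N × ZMod L) :
    starRingEnd ℂ (Smat y p q) = Smat y p q := by
  rw [Smat, map_sum]
  calc ∑ m : ZMod L, starRingEnd ℂ (starRingEnd ℂ (vvec y m p) * vvec y m q)
      = ∑ m : ZMod L, starRingEnd ℂ (vvec y (-m) p) * vvec y (-m) q := by
        refine Finset.sum_congr rfl fun m _ => ?_
        rw [vvec_neg, vvec_neg, Complex.conj_conj, _root_.map_mul, Complex.conj_conj]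
        try ring
    _ = ∑ m : ZMod L, starRingEnd ℂ (vvec y m p) * vvec y m q := by
        exact Equiv.sum_comp (Equiv.neg (ZMod L)) fun m => starRingEnd ℂ (vvec y m p) * vvec y m q
    _ = Smat y p q := rfl

lemma Smat_real (p q : Fin N × ZMod L) :
    (((Smat y p q).re : ℝ) : ℂ) = Smat y p q :=
  Complex.conj_eq_iff_re.mp (Smat_conj y p q)

lemma Smat_symm_re (p q : Fin N × ZMod L) : (Smat y q p).re = (Smat y p q).re := by
  have h : Smat y q p = starRingEnd ℂ (Smat y p q) := by
    rw [Smat, Smat, map_sum]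
    refine Finset.sum_congr rfl fun m _ => ?_
    rw [_root_.map_mul, Complex.conj_conj]
    ring
  rw [h, Complex.conj_re]

lemma Smat_block (hF : ∀ (i : Fin N) (k : ZMod L), dftR (y i) k ≠ 0) (i : Fin N) (k l : ZMod L) :
    Smat y (i, k) (i, l) = if k = l then (L : ℂ) else 0 := by
  have hterm : ∀ m : ZMod L, starRingEnd ℂ (vvec y m (i, k)) * vvec y m (i, l)
      = e ((k - l) * m) := by
    intro m
    simp only [vvec, _root_.map_mul, Complex.conj_conj]
    rw [← e_neg, neg_neg]
    calc phase (dftR (y i) m) * e (m * k) * (starRingEnd ℂ (phase (dftR (y i) m)) * e (-(m * l)))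
        = (starRingEnd ℂ (phase (dftR (y i) m)) * phase (dftR (y i) m)) * (e (m * k) * e (-(m * l))) := by
          ring
      _ = e ((k - l) * m) := by
          rw [conj_phase_mul (hF i m), one_mul, ← e_add]
          congr 1
          ring
  rw [Smat]
  rw [Finset.sum_congr rfl fun m _ => hterm m]
  rw [sum_e]
  congr 1
  simp [sub_eq_zero, eq_iff_iff]

lemma W0_feas (hF : ∀ (i : Fin N) (k : ZMod L), dftR (y i) k ≠ 0) : Feas N L (W0 y) := by
  have hL : (0:ℝ) < L := Nat.cast_pos.mpr (Nat.pos_of_ne_zero (NeZero.ne L))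
  refine ⟨Matrix.PosSemidef.of_dotProduct_mulVec_nonneg ?_ ?_, ?_, ?_⟩
  · -- IsHermitian
    ext p q
    rw [Matrix.conjTranspose_apply, star_trivial, W0, W0, Smat_symm_re]
  · -- nonneg quadratic form
    intro x
    rw [star_trivial]
    have hmv : ∀ p, (W0 y).mulVec x p = ∑ q, ((Smat y p q).re / (L^2:ℝ)) * x q := by
      intro p
      simp [Matrix.mulVec, dotProduct, W0]
    have hq : x ⬝ᵥ (W0 y).mulVec x = (∑ p, ∑ q, x p * x q * (Smat y p q).re) / (L^2:ℝ) := by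
      rw [dotProduct]
      rw [Finset.sum_div]
      refine Finset.sum_congr rfl fun p _ => ?_
      rw [hmv, Finset.mul_sum, Finset.sum_div]
      refine Finset.sum_congr rfl fun q _ => ?_
      field_simp
    rw [hq]
    apply div_nonneg _ (by positivity)
    have hre : ∑ p, ∑ q, x p * x q * (Smat y p q).re
        = (∑ p, ∑ q, ((x p : ℝ):ℂ) * ((x q : ℝ):ℂ) * Smat y p q).re := by
      rw [Complex.re_sum]
      refine Finset.sum_congr rfl fun p _ => ?_
      rw [Complex.re_sum]
      refine Finset.sum_congr rfl fun q _ => ?_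
      rw [show ((x p : ℝ):ℂ) * ((x q : ℝ):ℂ) * Smat y p q
          = ((x p * x q : ℝ) : ℂ) * Smat y p q by push_cast; ring]
      rw [Complex.re_ofReal_mul]
    rw [hre]
    have hsq : ∑ p, ∑ q, ((x p : ℝ):ℂ) * ((x q : ℝ):ℂ) * Smat y p q
        = ∑ m : ZMod L, ((Complex.normSq (∑ p, ((x p : ℝ):ℂ) * vvec y m p) : ℝ) : ℂ) := by
      simp only [Smat]
      calc ∑ p, ∑ q, ((x p : ℝ):ℂ) * ((x q : ℝ):ℂ) * ∑ m : ZMod L, starRingEnd ℂ (vvec y m p) * vvec y m q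
          = ∑ p, ∑ m : ZMod L, ∑ q, ((x p : ℝ):ℂ) * starRingEnd ℂ (vvec y m p) * (((x q : ℝ):ℂ) * vvec y m q) := by
            refine Finset.sum_congr rfl fun p _ => ?_
            rw [Finset.sum_comm]
            refine Finset.sum_congr rfl fun q _ => ?_
            rw [Finset.mul_sum]
            refine Finset.sum_congr rfl fun m _ => by ring
        _ = ∑ m : ZMod L, ∑ p, ∑ q, ((x p : ℝ):ℂ) * starRingEnd ℂ (vvec y m p) * (((x q : ℝ):ℂ) * vvec y m q) := Finset.sum_comm
        _ = ∑ m : ZMod L, ((Complex.normSq (∑ p, ((x p : ℝ):ℂ) * vvec y m p) : ℝ) : ℂ) := by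
            refine Finset.sum_congr rfl fun m _ => ?_
            have hT : ((Complex.normSq (∑ p, ((x p : ℝ):ℂ) * vvec y m p) : ℝ) : ℂ)
                = (∑ p, starRingEnd ℂ (((x p : ℝ):ℂ) * vvec y m p)) * (∑ q, ((x q : ℝ):ℂ) * vvec y m q) := by
              rw [← map_sum, mul_comm, Complex.mul_conj]
            rw [hT, Finset.sum_mul_sum]
            refine Finset.sum_congr rfl fun p _ => Finset.sum_congr rfl fun q _ => ?_
            rw [_root_.map_mul, Complex.conj_ofReal]
            try ring
    rw [hsq, Complex.re_sum]
    refine Finset.sum_nonneg fun m _ => ?_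
    rw [Complex.ofReal_re]
    exact Complex.normSq_nonneg _
  · -- off-diagonal blocks
    intro i k l hkl
    rw [W0, Smat_block y hF, if_neg hkl]
    simp
  · -- diagonal sum
    intro i
    have : ∀ k : ZMod L, W0 y (i, k) (i, k) = (L : ℝ) / (L^2 : ℝ) := by
      intro k
      rw [W0, Smat_block y hF, if_pos rfl]
      simp
    rw [Finset.sum_congr rfl fun k _ => this k]
    rw [Finset.sum_const, Finset.card_univ, ZMod.card]
    field_simp
    ring
    exact mul_inv_cancel₀ hL.ne'
lemma Tval (hF : ∀ (i : Fin N) (k : ZMod L), dftR (y i) k ≠ 0) (m m' : ZMod L) :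
    ∑ p, uvec y m p * vvec y m' p
      = if m' = -m then (L : ℂ) * ((∑ i : Fin N, ‖(dftR (y i) m)‖ : ℝ) : ℂ) else 0 := by
  rw [Fintype.sum_prod_type]
  have hrow : ∀ i : Fin N, ∑ k : ZMod L, uvec y m (i, k) * vvec y m' (i, k)
      = starRingEnd ℂ (dftR (y i) m) * starRingEnd ℂ (phase (dftR (y i) m')) *
          (if -(m + m') = 0 then (L : ℂ) else 0) := by
    intro i
    rw [← sum_e (-(m + m')), Finset.mul_sum]
    refine Finset.sum_congr rfl fun k _ => ?_
    simp only [uvec, vvec]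
    have harg : e (-(m * k)) * e (-(m' * k)) = e (-(m + m') * k) := by
      rw [← e_add]; congr 1; ring
    calc starRingEnd ℂ (dftR (y i) m) * e (-(m * k)) *
          (starRingEnd ℂ (phase (dftR (y i) m')) * e (-(m' * k)))
        = starRingEnd ℂ (dftR (y i) m) * starRingEnd ℂ (phase (dftR (y i) m')) *
            (e (-(m * k)) * e (-(m' * k))) := by ring
      _ = _ := by rw [harg]
  rw [Finset.sum_congr rfl fun i _ => hrow i]
  by_cases h : m' = -m
  · rw [if_pos h]
    subst h
    have hterm : ∀ i : Fin N,
        starRingEnd ℂ (dftR (y i) m) * starRingEnd ℂ (phase (dftR (y i) (-m))) *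
          (if -(m + -m) = 0 then (L : ℂ) else 0)
        = ((‖(dftR (y i) m)‖ : ℝ) : ℂ) * L := by
      intro i
      rw [if_pos (by ring), dftR_neg, phase_conj, Complex.conj_conj, conj_mul_phase (hF i m)]
    rw [Finset.sum_congr rfl fun i _ => hterm i, ← Finset.sum_mul]
    push_cast
    ring
  · rw [if_neg h]
    have hne : ¬(-(m + m') = 0) := by
      intro hcontra
      exact h (by linear_combination -hcontra)
    refine Finset.sum_eq_zero fun i _ => ?_
    rw [if_neg hne, mul_zero]

lemma W0_quad (hF : ∀ (i : Fin N) (k : ZMod L), dftR (y i) k ≠ 0) (m : ZMod L) :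
    ∑ p, ∑ q, starRingEnd ℂ (uvec y m p) * ((W0 y p q : ℝ) : ℂ) * uvec y m q
      = (((∑ i : Fin N, ‖(dftR (y i) m)‖) ^ 2 : ℝ) : ℂ) := by
  have hLne : ((L : ℂ)) ≠ 0 := Nat.cast_ne_zero.mpr (NeZero.ne L)
  have hcast : ∀ p q, ((W0 y p q : ℝ) : ℂ) = Smat y p q / ((L : ℂ) ^ 2) := by
    intro p q
    rw [W0, Complex.ofReal_div, Smat_real]
    norm_cast
  rw [Finset.sum_congr rfl fun p _ => Finset.sum_congr rfl fun q _ => by rw [hcast p q]]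
  have hstep : ∑ p, ∑ q, starRingEnd ℂ (uvec y m p) * (Smat y p q / ((L:ℂ)^2)) * uvec y m q
      = (∑ m' : ZMod L, starRingEnd ℂ (∑ p, uvec y m p * vvec y m' p) *
          (∑ p, uvec y m p * vvec y m' p)) / ((L:ℂ)^2) := by
    rw [Finset.sum_div]
    have h1 : ∀ p, ∑ q, starRingEnd ℂ (uvec y m p) * (Smat y p q / ((L:ℂ)^2)) * uvec y m q
        = (∑ m' : ZMod L, (starRingEnd ℂ (uvec y m p * vvec y m' p)) *
            (∑ q, uvec y m q * vvec y m' q)) / ((L:ℂ)^2) := by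
      intro p
      rw [Finset.sum_div]
      have h2 : ∀ q, starRingEnd ℂ (uvec y m p) * (Smat y p q / ((L:ℂ)^2)) * uvec y m q
          = (∑ m' : ZMod L, starRingEnd ℂ (uvec y m p * vvec y m' p) * (uvec y m q * vvec y m' q))
              / ((L:ℂ)^2) := by
        intro q
        rw [Smat]
        simp only [Finset.sum_div, Finset.mul_sum, Finset.sum_mul]
        refine Finset.sum_congr rfl fun m' _ => ?_
        rw [_root_.map_mul]
        field_simp
      rw [Finset.sum_congr rfl fun q _ => h2 q]
      rw [← Finset.sum_div, ← Finset.sum_div]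
      congr 1
      rw [Finset.sum_comm]
      refine Finset.sum_congr rfl fun m' _ => ?_
      rw [Finset.mul_sum]
    rw [Finset.sum_congr rfl fun p _ => h1 p, ← Finset.sum_div, ← Finset.sum_div]
    congr 1
    rw [Finset.sum_comm]
    refine Finset.sum_congr rfl fun m' _ => ?_
    rw [← Finset.sum_mul, ← map_sum]
  rw [hstep]
  rw [Finset.sum_congr rfl fun m' _ => by rw [Tval y hF m m']]
  have hend : ∑ m' : ZMod L, starRingEnd ℂ
      (if m' = -m then (L : ℂ) * ((∑ i : Fin N, ‖(dftR (y i) m)‖ : ℝ) : ℂ) else 0) *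
      (if m' = -m then (L : ℂ) * ((∑ i : Fin N, ‖(dftR (y i) m)‖ : ℝ) : ℂ) else 0)
      = (L:ℂ)^2 * (((∑ i : Fin N, ‖(dftR (y i) m)‖) ^ 2 : ℝ) : ℂ) := by
    rw [Finset.sum_eq_single_of_mem (-m) (Finset.mem_univ _)]
    · rw [if_pos rfl, _root_.map_mul, Complex.conj_ofReal]
      push_cast
      ring_nf
      rw [Complex.conj_natCast]
      ring
    · intro m' _ hm'
      rw [if_neg hm', map_zero, zero_mul]
  rw [hend]
  field_simp

end Main
end MainPart
end Stmt7Aux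

open Stmt7Aux in
theorem stmt7 (N L : ℕ) [NeZero L] (y : Fin N → ZMod L → ℝ)
    (C : Matrix (Fin N × ZMod L) (Fin N × ZMod L) ℝ)
    (hC : ∀ (i j : Fin N) (k l : ZMod L),
      C (i, k) (j, l) = ∑ t : ZMod L, y i (t + k) * y j (t + l))
    (hF : ∀ (i : Fin N) (k : ZMod L), dftR (y i) k ≠ 0)
    (V : Matrix (Fin N × ZMod L) (Fin N × ZMod L) ℝ)
    (hfeas : Feas N L V)
    (hopt : ∀ W, Feas N L W → (C * W).trace ≤ (C * V).trace) :
    (C * V).trace =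
        ∑ k : ZMod L, (∑ i : Fin N, ‖dftR (y i) k‖ * Real.sqrt L) ^ 2 / L
      ∧ ∃ W, Feas N L W ∧ (C * W).trace =
        ∑ k : ZMod L, (∑ i : Fin N, ‖dftR (y i) k‖ * Real.sqrt L) ^ 2 / L := by
  have hLpos : (0:ℝ) < L := Nat.cast_pos.mpr (Nat.pos_of_ne_zero (NeZero.ne L))
  set M : ℝ := ∑ m : ZMod L, (∑ i : Fin N, ‖(dftR (y i) m)‖) ^ 2 with hM
  have hRHS : ∑ k : ZMod L, (∑ i : Fin N, ‖dftR (y i) k‖ * Real.sqrt L) ^ 2 / L = M := by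
    refine Finset.sum_congr rfl fun k _ => ?_
    rw [← Finset.sum_mul, mul_pow, Real.sq_sqrt hLpos.le]
    field_simp
  -- upper bound for any feasible W
  have hub : ∀ W, Feas N L W → (C * W).trace ≤ M := by
    intro W hW
    have hsym : ∀ p q : Fin N × ZMod L, W q p = W p q := by
      intro p q
      have h := congrFun (congrFun hW.1.1 p) q
      rwa [Matrix.conjTranspose_apply, star_trivial] at h
    have htr := trace_eq y C W hC hsym
    have htr' : (C * W).trace = ∑ m : ZMod L, (∑ p, ∑ q,
        starRingEnd ℂ (uvec y m p) * ((W p q : ℝ) : ℂ) * uvec y m q).re := by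
      have := congrArg Complex.re htr
      rwa [Complex.ofReal_re, Complex.re_sum] at this
    rw [htr', hM]
    exact Finset.sum_le_sum fun m _ => quad_bound y m W hW
  -- value at W0
  have hW0feas := W0_feas y hF
  have hW0sym : ∀ p q : Fin N × ZMod L, W0 y q p = W0 y p q := by
    intro p q
    rw [W0, W0, Smat_symm_re]
  have hval : (C * W0 y).trace = M := by
    have htr := trace_eq y C (W0 y) hC hW0sym
    rw [Finset.sum_congr rfl fun m _ => W0_quad y hF m] at htr
    rw [← Complex.ofReal_sum] at htr
    exact_mod_cast htr
  constructor
  · rw [hRHS]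
    refine le_antisymm (hub V hfeas) ?_
    rw [← hval]
    exact hopt (W0 y) hW0feas
  · exact ⟨W0 y, hW0feas, by rw [hRHS]; exact hval⟩
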